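/- arXiv:2312.06813 — 3 statements merged into one kernel-verified Lean document; each statement's English description precedes it below -/
import Mathlib

section
/- Let τ₁, τ₂ be reflection positive functionals with respect to data (𝒜₁,𝒜₁⁺,𝒜₁⁻,θ₁) and (𝒜₂,𝒜₂⁺,𝒜₂⁻,θ₂). Then the tensor product functional τ₁ ⊗ τ₂ on 𝒜₁ ⊗ 𝒜₂ is reflection positive with respect to (𝒜₁ ⊗ 𝒜₂, 𝒜₁⁺ ⊗ 𝒜₂⁺, 𝒜₁⁻ ⊗ 𝒜₂⁻, θ₁ ⊗ θ₂). -/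
open scoped ComplexOrder TensorProduct

open Matrix


lemma quad_real {n : ℕ} {M : Matrix (Fin n) (Fin n) ℂ}
    (h : ∀ v : Fin n → ℂ, 0 ≤ star v ⬝ᵥ M *ᵥ v) (u : Fin n → ℂ) :
    (starRingEnd ℂ) (star u ⬝ᵥ M *ᵥ u) = star u ⬝ᵥ M *ᵥ u := by
  have := (Complex.le_def.1 (h u)).2
  rw [Complex.conj_eq_iff_im]
  simpa using this.symm

lemma bform_conj {n : ℕ} {M : Matrix (Fin n) (Fin n) ℂ}
    (h : ∀ v : Fin n → ℂ, 0 ≤ star v ⬝ᵥ M *ᵥ v) (v w : Fin n → ℂ) :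
    star v ⬝ᵥ M *ᵥ w = (starRingEnd ℂ) (star w ⬝ᵥ M *ᵥ v) := by
  set a := star v ⬝ᵥ M *ᵥ w with ha
  set b := star w ⬝ᵥ M *ᵥ v with hb
  have h1 : star (v + w) ⬝ᵥ M *ᵥ (v + w)
      = (star v ⬝ᵥ M *ᵥ v) + (star w ⬝ᵥ M *ᵥ w) + a + b := by
    simp [star_add, add_dotProduct, mulVec_add, dotProduct_add, ha, hb]
    ring
  have h2 : star (v + Complex.I • w) ⬝ᵥ M *ᵥ (v + Complex.I • w)
      = (star v ⬝ᵥ M *ᵥ v) + (star w ⬝ᵥ M *ᵥ w) + Complex.I * a - Complex.I * b := by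
    simp [star_add, star_smul, add_dotProduct, smul_dotProduct, mulVec_add, mulVec_smul,
      dotProduct_add, dotProduct_smul, ha, hb, Complex.conj_I, smul_eq_mul]
    linear_combination (-(star w ⬝ᵥ M *ᵥ w)) * Complex.I_sq
  have q1 := quad_real h (v + w)
  have q2 := quad_real h (v + Complex.I • w)
  have qv := quad_real h v
  have qw := quad_real h w
  rw [h1] at q1
  rw [h2] at q2
  simp only [map_add, map_sub, _root_.map_mul, Complex.conj_I, qv, qw] at q1 q2
  have e1 : (starRingEnd ℂ) a + (starRingEnd ℂ) b = a + b := by linear_combination q1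
  have e2 : -(Complex.I * (starRingEnd ℂ) a) + Complex.I * (starRingEnd ℂ) b
      = Complex.I * a - Complex.I * b := by linear_combination q2
  have : (starRingEnd ℂ) a = b := by
    linear_combination e1/2 + (Complex.I/2) * e2 + (((starRingEnd ℂ) a - (starRingEnd ℂ) b + a - b)/2) * Complex.I_sq
  calc a = (starRingEnd ℂ) ((starRingEnd ℂ) a) := (Complex.conj_conj a).symm
    _ = (starRingEnd ℂ) b := by rw [this]

lemma posSemidef_of_quadform {n : ℕ} {M : Matrix (Fin n) (Fin n) ℂ}
    (h : ∀ v : Fin n → ℂ, 0 ≤ star v ⬝ᵥ M *ᵥ v) : M.PosSemidef := by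
  refine Matrix.posSemidef_iff_dotProduct_mulVec.2 ⟨?_, h⟩
  ext i j
  have := bform_conj h (Pi.single i 1) (Pi.single j 1)
  simp only [Matrix.conjTranspose_apply]
  have hs : ∀ k l : Fin n, star (Pi.single k (1:ℂ)) ⬝ᵥ M *ᵥ (Pi.single l 1) = M k l := by
    intro k l
    simp [dotProduct, mulVec, Pi.single_apply, mul_ite, ite_mul, Finset.sum_ite_eq,
      Finset.sum_ite_eq', apply_ite]
  rw [hs, hs] at this
  simpa [Matrix.conjTranspose_apply, RCLike.star_def] using this.symm

lemma schur_sum {n : ℕ} {M N : Matrix (Fin n) (Fin n) ℂ}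
    (hM : ∀ v : Fin n → ℂ, 0 ≤ star v ⬝ᵥ M *ᵥ v)
    (hN : ∀ v : Fin n → ℂ, 0 ≤ star v ⬝ᵥ N *ᵥ v) :
    0 ≤ ∑ i, ∑ j, M i j * N i j := by
  obtain ⟨B, hB⟩ : ∃ B : Matrix (Fin n) (Fin n) ℂ, M = Bᴴ * B := by
    open scoped MatrixOrder in
    exact CStarAlgebra.nonneg_iff_eq_star_mul_self.mp (posSemidef_of_quadform hM).nonneg
  have hMij : ∀ i j, M i j = ∑ k, (starRingEnd ℂ) (B k i) * B k j := by
    intro i j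
    rw [hB]
    simp [Matrix.mul_apply, Matrix.conjTranspose_apply]
  calc (0:ℂ) ≤ ∑ k, star (fun i => B k i) ⬝ᵥ N *ᵥ (fun i => B k i) :=
        Finset.sum_nonneg fun k _ => hN _
    _ = ∑ i, ∑ j, M i j * N i j := by
        simp only [hMij, dotProduct, mulVec, Pi.star_apply, Finset.sum_mul, Finset.mul_sum]
        rw [Finset.sum_comm]
        refine Finset.sum_congr rfl fun i _ => ?_
        rw [Finset.sum_comm]
        refine Finset.sum_congr rfl fun j _ => ?_
        refine Finset.sum_congr rfl fun k _ => ?_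
        simp [RCLike.star_def]
        ring

lemma kernel_quadform {A : Type*} [Ring A] [Algebra ℂ A] (P : Subalgebra ℂ A)
    (θ : A →ₛₗ[starRingEnd ℂ] A) (τ : A →ₗ[ℂ] ℂ) (hRP : ∀ a ∈ P, 0 ≤ τ (θ a * a))
    {n : ℕ} (x : Fin n → A) (hx : ∀ i, x i ∈ P) (v : Fin n → ℂ) :
    0 ≤ star v ⬝ᵥ (Matrix.of fun i j => τ (θ (x i) * x j)) *ᵥ v := by
  have hmem : (∑ i, v i • x i) ∈ P :=
    Subalgebra.sum_mem P fun i _ => P.smul_mem (hx i) _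
  have key : star v ⬝ᵥ (Matrix.of fun i j => τ (θ (x i) * x j)) *ᵥ v
      = τ (θ (∑ i, v i • x i) * (∑ j, v j • x j)) := by
    rw [map_sum θ]
    simp only [LinearMap.map_smulₛₗ, starRingEnd_apply]
    rw [Finset.sum_mul_sum]
    simp only [smul_mul_smul_comm, map_sum, LinearMap.map_smul, smul_eq_mul]
    simp only [dotProduct, Matrix.mulVec, Pi.star_apply, Matrix.of_apply,
      dotProduct, RCLike.star_def, Finset.mul_sum]
    refine Finset.sum_congr rfl fun i _ => Finset.sum_congr rfl fun j _ => ?_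
    rw [starRingEnd_apply]
    ring
  rw [key]
  exact hRP _ hmem


/-- The tensor product of two reflection positive functionals is reflection
positive with respect to the tensor-product data
`(𝒜₁ ⊗ 𝒜₂, 𝒜₁⁺ ⊗ 𝒜₂⁺, 𝒜₁⁻ ⊗ 𝒜₂⁻, θ₁ ⊗ θ₂)`. -/
theorem tensor_product_reflection_positive
    {A1 A2 : Type*} [Ring A1] [Ring A2] [Algebra ℂ A1] [Algebra ℂ A2]
    (P1 M1 : Subalgebra ℂ A1) (P2 M2 : Subalgebra ℂ A2)
    (θ1 : A1 →ₛₗ[starRingEnd ℂ] A1) (θ2 : A2 →ₛₗ[starRingEnd ℂ] A2)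
    (hθ1mul : ∀ x y : A1, θ1 (x * y) = θ1 x * θ1 y)
    (hθ2mul : ∀ x y : A2, θ2 (x * y) = θ2 x * θ2 y)
    (hθ1θ : ∀ x : A1, θ1 (θ1 x) = x)
    (hθ2θ : ∀ x : A2, θ2 (θ2 x) = x)
    (hθ1map : ⇑θ1 '' (P1 : Set A1) = (M1 : Set A1))
    (hθ2map : ⇑θ2 '' (P2 : Set A2) = (M2 : Set A2))
    (hcomm1 : ∀ x ∈ P1, ∀ y ∈ M1, x * y = y * x)
    (hcomm2 : ∀ x ∈ P2, ∀ y ∈ M2, x * y = y * x)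
    (τ1 : A1 →ₗ[ℂ] ℂ) (τ2 : A2 →ₗ[ℂ] ℂ)
    (hRP1 : ∀ a ∈ P1, 0 ≤ τ1 (θ1 a * a))
    (hRP2 : ∀ a ∈ P2, 0 ≤ τ2 (θ2 a * a))
    (θ : (A1 ⊗[ℂ] A2) →ₛₗ[starRingEnd ℂ] (A1 ⊗[ℂ] A2))
    (hθ : ∀ (x : A1) (y : A2), θ (x ⊗ₜ y) = θ1 x ⊗ₜ θ2 y)
    (T : (A1 ⊗[ℂ] A2) →ₗ[ℂ] ℂ)
    (hT : ∀ (x : A1) (y : A2), T (x ⊗ₜ y) = τ1 x * τ2 y) :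
    ∀ c ∈ Submodule.span ℂ
        {z : A1 ⊗[ℂ] A2 | ∃ x ∈ P1, ∃ y ∈ P2, z = x ⊗ₜ y},
      0 ≤ T (θ c * c) := by
  intro c hc
  obtain ⟨n, f, g, hg⟩ := Submodule.mem_span_set'.1 hc
  have hprop : ∀ i : Fin n, ∃ x ∈ P1, ∃ y ∈ P2, (g i : A1 ⊗[ℂ] A2) = x ⊗ₜ y :=
    fun i => (g i).2
  choose xx hxx yy hyy hxy using hprop
  set X : Fin n → A1 := fun i => f i • xx i with hX
  have hXP : ∀ i, X i ∈ P1 := fun i => P1.smul_mem (hxx i) _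
  have hc' : c = ∑ i, X i ⊗ₜ[ℂ] yy i := by
    rw [← hg]
    refine Finset.sum_congr rfl fun i _ => ?_
    rw [hxy i, hX]
    exact (TensorProduct.smul_tmul' (f i) (xx i) (yy i)).symm
  have hθc : θ c = ∑ i, θ1 (X i) ⊗ₜ[ℂ] θ2 (yy i) := by
    rw [hc', map_sum]
    exact Finset.sum_congr rfl fun i _ => hθ _ _
  have hmul : θ c * c = ∑ i, ∑ j, (θ1 (X i) * X j) ⊗ₜ[ℂ] (θ2 (yy i) * yy j) := by
    rw [hθc, hc', Finset.sum_mul_sum]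
    exact Finset.sum_congr rfl fun i _ => Finset.sum_congr rfl fun j _ =>
      Algebra.TensorProduct.tmul_mul_tmul _ _ _ _
  have hTval : T (θ c * c)
      = ∑ i, ∑ j, τ1 (θ1 (X i) * X j) * τ2 (θ2 (yy i) * yy j) := by
    rw [hmul, map_sum]
    exact Finset.sum_congr rfl fun i _ => by
      rw [map_sum]
      exact Finset.sum_congr rfl fun j _ => hT _ _
  rw [hTval]
  exact schur_sum (M := Matrix.of fun i j => τ1 (θ1 (X i) * X j))
    (N := Matrix.of fun i j => τ2 (θ2 (yy i) * yy j))
    (fun v => kernel_quadform P1 θ1 τ1 hRP1 X hXP v)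
    (fun v => kernel_quadform P2 θ2 τ2 hRP2 yy hyy v)
end

section
/- Let φ₁ : A₁ → ℂ and φ₂ : A₂ → ℂ be linear functionals on unital complex *-algebras that are positive (φ(a*a) ≥ 0 for all a). Then the free product functional φ₁ * φ₂ on the unital algebra free product A₁ * A₂, defined by requiring φ to restrict to φᵢ on Aᵢ and to vanish on alternating products of centered elements, is positive. -/
set_option linter.unusedSectionVars false

open scoped ComplexOrder

open LinearAlgebra

namespace FreeProdPos

variable (A : Fin 2 → Type*) [∀ i, Ring (A i)] [∀ i, Algebra ℂ (A i)]
  [∀ i, StarRing (A i)] [∀ i, StarModule ℂ (A i)]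

/-- letters of words in the free product -/
abbrev Sig := Σ i : Fin 2, A i

variable {A} in
/-- the value of a word in the free product -/
noncomputable def val (l : List (Sig A)) : FreeProduct ℂ A :=
  (l.map fun p => FreeProduct.ι ℂ A p.1 p.2).prod

variable {A} in
/-- alternating words -/
def Alt (l : List (Sig A)) : Prop := l.Chain' (fun p q => p.1 ≠ q.1)

variable (φi : ∀ i, A i →ₗ[ℂ] ℂ)

variable {A} in
/-- star of a letter -/
def sstar (p : Sig A) : Sig A := ⟨p.1, star p.2⟩

variable {A φi} in
/-- centered words -/
def Cent (l : List (Sig A)) : Prop := ∀ p ∈ l, φi p.1 p.2 = 0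

/-- the pairing of two letters -/
noncomputable def pairV (p q : Sig A) : ℂ :=
  if h : p.1 = q.1 then φi q.1 (star (cast (congrArg A h) p.2) * q.2) else 0

/-- the Gram pairing of two words -/
noncomputable def Gf : List (Sig A) → List (Sig A) → ℂ
  | [], [] => 1
  | p :: w, q :: v => pairV A φi p q * Gf w v
  | _, _ => 0

variable {A φi}

@[simp] theorem val_nil : val ([] : List (Sig A)) = 1 := rfl

@[simp] theorem val_cons (p : Sig A) (l : List (Sig A)) :
    val (p :: l) = FreeProduct.ι ℂ A p.1 p.2 * val l := by
  simp [val]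

theorem val_append (l₁ l₂ : List (Sig A)) : val (l₁ ++ l₂) = val l₁ * val l₂ := by
  simp [val]

@[simp] theorem Gf_nil_nil : Gf A φi [] [] = 1 := rfl
@[simp] theorem Gf_cons_cons (p q : Sig A) (w v : List (Sig A)) :
    Gf A φi (p :: w) (q :: v) = pairV A φi p q * Gf A φi w v := rfl
@[simp] theorem Gf_nil_cons (q : Sig A) (v : List (Sig A)) : Gf A φi [] (q :: v) = 0 := rfl
@[simp] theorem Gf_cons_nil (p : Sig A) (w : List (Sig A)) : Gf A φi (p :: w) [] = 0 := rfl

section phi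

variable (φ : FreeProduct ℂ A →ₗ[ℂ] ℂ)
variable (hφ_vanish : ∀ (n : ℕ) (idx : Fin n → Fin 2)
      (_halt : ∀ (k : Fin n) (h : (k : ℕ) + 1 < n), idx k ≠ idx ⟨(k : ℕ) + 1, h⟩)
      (a : ∀ k, A (idx k)), 0 < n → (∀ k, φi (idx k) (a k) = 0) →
      φ ((List.ofFn fun k => FreeProduct.ι ℂ A (idx k) (a k)).prod) = 0)

include hφ_vanish in
theorem phi_word_eq_zero (l : List (Sig A)) (hne : l ≠ []) (halt : Alt l) (hc : Cent (φi := φi) l) :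
    φ (val l) = 0 := by
  have key := hφ_vanish l.length (fun k => (l.get k).1) ?_ (fun k => (l.get k).2) ?_ ?_
  · have : (List.ofFn fun k => FreeProduct.ι ℂ A (l.get k).1 (l.get k).2)
        = l.map fun p => FreeProduct.ι ℂ A p.1 p.2 := by
      conv_rhs => rw [← List.ofFn_get l, List.map_ofFn]
      rfl
    rw [this] at key
    simpa [val] using key
  · intro k h
    rw [Alt, List.Chain', List.isChain_iff_getElem] at halt
    have h' : (k : ℕ) < l.length - 1 := by omega
    exact halt k h
  · exact List.length_pos_iff.mpr hne
  · intro k; exact hc _ (List.get_mem l k)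

end phi

section herm

variable (hφi_pos : ∀ i (a : A i), 0 ≤ φi i (star a * a))

include hφi_pos in
theorem phi_herm (i : Fin 2) (x y : A i) :
    (starRingEnd ℂ) (φi i (star x * y)) = φi i (star y * x) := by
  have hr : ∀ z : A i, (starRingEnd ℂ) (φi i (star z * z)) = φi i (star z * z) := by
    intro z
    have h0 := hφi_pos i z
    have him : (φi i (star z * z)).im = 0 := by
      rw [Complex.le_def] at h0
      simpa using h0.2.symm
    exact Complex.conj_eq_iff_im.mpr him
  have e1 : (starRingEnd ℂ) (φi i (star x * y)) + (starRingEnd ℂ) (φi i (star y * x))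
      = φi i (star x * y) + φi i (star y * x) := by
    have h := hr (x + y)
    simp only [star_add, add_mul, mul_add, map_add, RingHom.map_add] at h
    have hx := hr x
    have hy := hr y
    linear_combination h - hx - hy
  have key : Complex.I * ((starRingEnd ℂ) (φi i (star y * x)) - (starRingEnd ℂ) (φi i (star x * y)))
      = Complex.I * (φi i (star x * y) - φi i (star y * x)) := by
    have h := hr (x + Complex.I • y)
    simp only [star_add, star_smul, add_mul, mul_add, smul_mul_assoc, mul_smul_comm, smul_smul,
      map_add, map_smul, map_mul, smul_eq_mul, Complex.star_def, Complex.conj_I, Complex.conj_conj,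
      mul_neg, neg_mul, neg_neg, map_neg] at h
    linear_combination h - hr x + Complex.I * Complex.I * hr y
  have e3 := mul_left_cancel₀ Complex.I_ne_zero key
  linear_combination (e1 - e3) / 2

include hφi_pos in
theorem phi_star_eq (i : Fin 2) (a : A i) :
    φi i (star a) = (starRingEnd ℂ) (φi i a) := by
  have h := phi_herm (φi := φi) hφi_pos i a 1
  rw [mul_one, star_one, one_mul] at h
  have h2 := congrArg (starRingEnd ℂ) h
  simpa using h2

end herm


section span

/-- centering of an element -/
noncomputable def ctr (i : Fin 2) (a : A i) : A i := a - φi i a • 1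

theorem phi_ctr (hφi_one : ∀ i, φi i 1 = 1) (i : Fin 2) (a : A i) :
    φi i (ctr (φi := φi) i a) = 0 := by
  simp [ctr, hφi_one i]

theorem iota_eq (i : Fin 2) (a : A i) :
    FreeProduct.ι ℂ A i a = FreeProduct.ι ℂ A i (ctr (φi := φi) i a) + φi i a • 1 := by
  rw [ctr, map_sub]
  have : (FreeProduct.ι ℂ A i) (φi i a • 1) = φi i a • 1 := by
    rw [map_smul, map_one]
  rw [this]
  abel

variable (A φi) in
/-- the spanning set: values of alternating centered words (including the empty word, `1`) -/
def spanset : Set (FreeProduct ℂ A) :=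
  {x | ∃ l : List (Sig A), Alt l ∧ Cent (φi := φi) l ∧ val l = x}

theorem one_mem_spanset : (1 : FreeProduct ℂ A) ∈ spanset A φi :=
  ⟨[], by simp [Alt, Cent, List.Chain']⟩

theorem mul_word_mem (hφi_one : ∀ i, φi i 1 = 1) (i : Fin 2) (a : A i) (l : List (Sig A))
    (hAlt : Alt l) (hC : Cent (φi := φi) l) :
    FreeProduct.ι ℂ A i a * val l ∈ Submodule.span ℂ (spanset A φi) := by
  cases l with
  | nil =>
    rw [val_nil, mul_one, iota_eq (φi := φi) i a]
    refine add_mem (Submodule.subset_span ?_) (Submodule.smul_mem _ _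
      (Submodule.subset_span (one_mem_spanset (φi := φi))))
    exact ⟨[⟨i, ctr (φi := φi) i a⟩], by simp [Alt, List.Chain'], by simp [Cent, phi_ctr hφi_one], by simp⟩
  | cons q t =>
    obtain ⟨j, b⟩ := q
    have htAlt : Alt t := hAlt.tail
    have htC : Cent (φi := φi) t := fun p hp => hC p (List.mem_cons_of_mem _ hp)
    by_cases h : i = j
    · subst h
      have hmul : FreeProduct.ι ℂ A i a * val (⟨i, b⟩ :: t)
          = FreeProduct.ι ℂ A i (a * b) * val t := by
        rw [val_cons, ← mul_assoc, ← map_mul]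
      rw [hmul, iota_eq (φi := φi) i (a * b), add_mul, smul_mul_assoc, one_mul]
      refine add_mem (Submodule.subset_span ?_) (Submodule.smul_mem _ _
        (Submodule.subset_span ⟨t, htAlt, htC, rfl⟩))
      refine ⟨⟨i, ctr (φi := φi) i (a * b)⟩ :: t, ?_, ?_, by simp⟩
      · rw [Alt, List.Chain', List.isChain_cons]
        exact ⟨fun y hy => (List.isChain_cons.mp hAlt).1 y hy, htAlt⟩
      · intro p hp
        rcases List.mem_cons.mp hp with h' | h'
        · subst h'; exact phi_ctr hφi_one _ _
        · exact htC p h'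
    · rw [iota_eq (φi := φi) i a, add_mul, smul_mul_assoc, one_mul]
      refine add_mem (Submodule.subset_span ?_) (Submodule.smul_mem _ _
        (Submodule.subset_span ⟨⟨j, b⟩ :: t, hAlt, hC, rfl⟩))
      refine ⟨⟨i, ctr (φi := φi) i a⟩ :: ⟨j, b⟩ :: t, ?_, ?_, by simp⟩
      · rw [Alt, List.Chain', List.isChain_cons_cons]
        exact ⟨h, hAlt⟩
      · intro p hp
        rcases List.mem_cons.mp hp with h' | h'
        · subst h'; exact phi_ctr hφi_one _ _
        · exact hC p h'

theorem mul_mem_span (hφi_one : ∀ i, φi i 1 = 1) (i : Fin 2) (a : A i)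
    (z : FreeProduct ℂ A) (hz : z ∈ Submodule.span ℂ (spanset A φi)) :
    FreeProduct.ι ℂ A i a * z ∈ Submodule.span ℂ (spanset A φi) := by
  induction hz using Submodule.span_induction with
  | mem x hx =>
    obtain ⟨l, hAlt, hC, rfl⟩ := hx
    exact mul_word_mem hφi_one i a l hAlt hC
  | zero => rw [mul_zero]; exact zero_mem _
  | add x y _ _ hx hy => rw [mul_add]; exact add_mem hx hy
  | smul c x _ hx => rw [mul_smul_comm]; exact Submodule.smul_mem _ _ hx

theorem mem_span_spanset (hφi_one : ∀ i, φi i 1 = 1) (x : FreeProduct ℂ A) :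
    x ∈ Submodule.span ℂ (spanset A φi) := by
  obtain ⟨y, rfl⟩ := RingCon.mkₐ_surjective (α := ℂ) (FreeProduct.ringCon ℂ A) x
  have key : ∀ y : FreeProduct.FreeTensorAlgebra ℂ A, ∀ z ∈ Submodule.span ℂ (spanset A φi),
      FreeProduct.mkAlgHom ℂ A y * z ∈ Submodule.span ℂ (spanset A φi) := by
    intro y
    induction y using TensorAlgebra.induction with
    | algebraMap r =>
      intro z hz
      rw [AlgHom.commutes, ← Algebra.smul_def]
      exact Submodule.smul_mem _ _ hz
    | ι m =>
      induction m using DirectSum.induction_on with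
      | zero =>
        intro z hz
        rw [map_zero, map_zero, zero_mul]
        exact zero_mem _
      | of j a =>
        intro z hz
        have : FreeProduct.mkAlgHom ℂ A (TensorAlgebra.ι ℂ (DirectSum.of _ j a))
            = FreeProduct.ι ℂ A j a := by
          rw [FreeProduct.ι_def]
          rfl
        rw [this]
        exact mul_mem_span hφi_one j a z hz
      | add m n hm hn =>
        intro z hz
        rw [map_add, map_add, add_mul]
        exact add_mem (hm z hz) (hn z hz)
    | mul a b ha hb =>
      intro z hz
      rw [map_mul, mul_assoc]
      exact ha _ (hb z hz)
    | add a b ha hb =>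
      intro z hz
      rw [map_add, add_mul]
      exact add_mem (ha z hz) (hb z hz)
  have h1 : (1 : FreeProduct ℂ A) ∈ Submodule.span ℂ (spanset A φi) :=
    Submodule.subset_span (one_mem_spanset (φi := φi))
  simpa using key y 1 h1

end span

section pairing

/-- reversal + star of a word -/
def revstar (l : List (Sig A)) : List (Sig A) := (l.map sstar).reverse

theorem revstar_cons (p : Sig A) (t : List (Sig A)) :
    revstar (p :: t) = revstar t ++ [sstar p] := by
  simp [revstar]

theorem revstar_alt {l : List (Sig A)} (h : Alt l) : Alt (revstar l) := by
  rw [Alt, revstar, List.Chain', List.isChain_reverse, List.isChain_map]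
  exact h.imp fun {a b} hab => by simpa [sstar, flip] using fun hh => hab hh.symm

theorem revstar_cent (hφi_pos : ∀ i (a : A i), 0 ≤ φi i (star a * a)) {l : List (Sig A)}
    (h : Cent (φi := φi) l) : Cent (φi := φi) (revstar l) := by
  intro p hp
  rw [revstar, List.mem_reverse, List.mem_map] at hp
  obtain ⟨q, hq, rfl⟩ := hp
  rw [sstar]
  rw [phi_star_eq (φi := φi) hφi_pos q.1 q.2, h q hq, map_zero]

theorem revstar_getLast? (l : List (Sig A)) :
    (revstar l).getLast? = l.head?.map sstar := by
  rw [revstar, List.getLast?_reverse, List.head?_map]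

variable (S : FreeProduct ℂ A →ₛₗ[starRingEnd ℂ] FreeProduct ℂ A)
  (hSmul : ∀ x y : FreeProduct ℂ A, S (x * y) = S y * S x)
  (hSι : ∀ (i : Fin 2) (a : A i), S (FreeProduct.ι ℂ A i a) = FreeProduct.ι ℂ A i (star a))

include hSmul hSι in
theorem S_one : S 1 = 1 := by
  have h1 : (FreeProduct.ι ℂ A 0) (1 : A 0) = 1 := map_one _
  calc S 1 = S (FreeProduct.ι ℂ A 0 1) := by rw [h1]
  _ = FreeProduct.ι ℂ A 0 (star 1) := hSι 0 1
  _ = 1 := by rw [star_one, h1]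

include hSmul hSι in
theorem S_val (l : List (Sig A)) : S (val l) = val (revstar l) := by
  induction l with
  | nil => simpa [revstar] using S_one S hSmul hSι
  | cons p t ih =>
    rw [val_cons, hSmul, ih, hSι, revstar_cons, val_append, val_cons, val_nil, mul_one, sstar]

variable (φ : FreeProduct ℂ A →ₗ[ℂ] ℂ)
  (hφ_one : φ 1 = 1)
  (hφ_vanish : ∀ (n : ℕ) (idx : Fin n → Fin 2)
      (_halt : ∀ (k : Fin n) (h : (k : ℕ) + 1 < n), idx k ≠ idx ⟨(k : ℕ) + 1, h⟩)
      (a : ∀ k, A (idx k)), 0 < n → (∀ k, φi (idx k) (a k) = 0) →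
      φ ((List.ofFn fun k => FreeProduct.ι ℂ A (idx k) (a k)).prod) = 0)
  (hφi_pos : ∀ i (a : A i), 0 ≤ φi i (star a * a))
  (hφi_one : ∀ i, φi i 1 = 1)

include hSmul hSι hφ_one hφ_vanish hφi_pos hφi_one in
theorem pairing : ∀ w : List (Sig A), Alt w → Cent (φi := φi) w →
    ∀ v : List (Sig A), Alt v → Cent (φi := φi) v →
    φ (S (val w) * val v) = Gf A φi w v := by
  intro w
  induction w with
  | nil =>
    intro _ _ v hva hvc
    rw [val_nil, S_one S hSmul hSι, one_mul]
    cases v with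
    | nil => simpa using hφ_one
    | cons q v' =>
      rw [Gf_nil_cons]
      exact phi_word_eq_zero (φi := φi) φ hφ_vanish _ (by simp) hva hvc
  | cons p w' ih =>
    intro hwa hwc v hva hvc
    obtain ⟨i, a⟩ := p
    have hw'a : Alt w' := hwa.tail
    have hw'c : Cent (φi := φi) w' := fun r hr => hwc r (List.mem_cons_of_mem _ hr)
    cases v with
    | nil =>
      rw [val_nil, mul_one, S_val S hSmul hSι, Gf_cons_nil]
      refine phi_word_eq_zero (φi := φi) φ hφ_vanish _ (by simp [revstar]) (revstar_alt hwa)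
        (revstar_cent (φi := φi) hφi_pos hwc)
    | cons q v' =>
      obtain ⟨j, b⟩ := q
      have hv'a : Alt v' := hva.tail
      have hv'c : Cent (φi := φi) v' := fun r hr => hvc r (List.mem_cons_of_mem _ hr)
      by_cases h : i = j
      · subst h
        set c : A i := star a * b with hc
        have key : S (val (⟨i, a⟩ :: w')) * val (⟨i, b⟩ :: v')
            = φi i c • (S (val w') * val v')
              + val (revstar w' ++ ⟨i, ctr (φi := φi) i c⟩ :: v') := by
          rw [S_val S hSmul hSι (⟨i, a⟩ :: w'), S_val S hSmul hSι w']
          simp only [revstar_cons, val_append, val_cons, val_nil, mul_one, sstar, mul_assoc]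
          rw [← mul_assoc (FreeProduct.ι ℂ A i (star a)) (FreeProduct.ι ℂ A i b), ← map_mul,
            ← hc, iota_eq (φi := φi) i c]
          simp only [add_mul, mul_add, smul_mul_assoc, one_mul, mul_smul_comm]
          rw [add_comm]
        rw [key, map_add, map_smul]
        have hvan : φ (val (revstar w' ++ ⟨i, ctr (φi := φi) i c⟩ :: v')) = 0 := by
          refine phi_word_eq_zero (φi := φi) φ hφ_vanish _ (by simp) ?_ ?_
          · rw [Alt, List.Chain', List.isChain_append]
            refine ⟨revstar_alt hw'a, ?_, ?_⟩
            · rw [List.isChain_cons]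
              exact ⟨fun y hy => (List.isChain_cons.mp hva).1 y hy, hv'a⟩
            · intro x hx y hy
              rw [revstar_getLast?] at hx
              cases hw' : w'.head? with
              | none => rw [hw'] at hx; simp at hx
              | some z =>
                rw [hw'] at hx
                obtain rfl : sstar z = x := by simpa using hx
                have hz : i ≠ z.1 := (List.isChain_cons.mp hwa).1 z hw'
                simp only [List.head?_cons, Option.mem_def, Option.some_inj] at hy
                subst hy
                simpa [sstar] using fun hh => hz hh.symm
          · intro r hr
            rcases List.mem_append.mp hr with h' | h'
            · exact revstar_cent (φi := φi) hφi_pos hw'c r h'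
            · rcases List.mem_cons.mp h' with h'' | h''
              · subst h''; exact phi_ctr hφi_one _ _
              · exact hv'c r h''
        rw [hvan, add_zero, ih hw'a hw'c v' hv'a hv'c, smul_eq_mul, Gf_cons_cons]
        congr 1
        show φi i c = pairV A φi ⟨i, a⟩ ⟨i, b⟩
        rw [pairV, dif_pos rfl]
        rfl
      · have key : S (val (⟨i, a⟩ :: w')) * val (⟨j, b⟩ :: v')
            = val (revstar (⟨i, a⟩ :: w') ++ ⟨j, b⟩ :: v') := by
          rw [S_val S hSmul hSι, val_append]
        rw [key, Gf_cons_cons, pairV, dif_neg h, zero_mul]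
        refine phi_word_eq_zero (φi := φi) φ hφ_vanish _ (by simp) ?_ ?_
        · rw [Alt, List.Chain', List.isChain_append]
          refine ⟨revstar_alt hwa, hva, ?_⟩
          intro x hx y hy
          rw [revstar_getLast?, List.head?_cons] at hx
          obtain rfl : sstar ⟨i, a⟩ = x := by simpa using hx
          simp only [List.head?_cons, Option.mem_def, Option.some_inj] at hy
          subst hy
          simpa [sstar] using h
        · intro r hr
          rcases List.mem_append.mp hr with h' | h'
          · exact revstar_cent (φi := φi) hφi_pos hwc r h'
          · exact hvc r h'

end pairing

section psd

/-- head element of a word, seen in `A i` (or `0`) -/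
def headA (i : Fin 2) : List (Sig A) → A i
  | [] => 0
  | p :: _ => if h : p.1 = i then cast (congrArg A h) p.2 else 0

/-- head index of a word -/
def headIdx : List (Sig A) → Option (Fin 2)
  | [] => none
  | p :: _ => some p.1

theorem gram_psd (hφi_pos : ∀ i (a : A i), 0 ≤ φi i (star a * a)) (n : ℕ) (i : Fin 2)
    (g : Fin n → A i) :
    Matrix.PosSemidef (Matrix.of fun j k => φi i (star (g j) * g k)) := by
  rw [Matrix.posSemidef_iff_dotProduct_mulVec]
  constructor
  · ext j k
    simp only [Matrix.conjTranspose_apply, Matrix.of_apply, RCLike.star_def]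
    exact phi_herm (φi := φi) hφi_pos i (g k) (g j)
  · intro x
    have hy : dotProduct (star x) ((Matrix.of fun j k => φi i (star (g j) * g k)).mulVec x)
        = φi i (star (∑ k, x k • g k) * (∑ k, x k • g k)) := by
      have hprod : star (∑ k, x k • g k) * (∑ k, x k • g k)
          = ∑ j, ∑ k, ((starRingEnd ℂ) (x j) * x k) • (star (g j) * g k) := by
        rw [star_sum, Finset.sum_mul_sum]
        refine Finset.sum_congr rfl fun j _ => Finset.sum_congr rfl fun k _ => ?_
        rw [star_smul, smul_mul_smul_comm, starRingEnd_apply]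
      rw [hprod, map_sum]
      rw [dotProduct]
      refine Finset.sum_congr rfl fun j _ => ?_
      rw [map_sum, Matrix.mulVec, dotProduct, Finset.mul_sum]
      refine Finset.sum_congr rfl fun k _ => ?_
      rw [map_smul, Matrix.of_apply, Pi.star_apply, starRingEnd_apply]
      simp only [smul_eq_mul]
      ring
    rw [hy]
    exact hφi_pos i _

theorem gram_entry (hφi_pos : ∀ i (a : A i), 0 ≤ φi i (star a * a)) (n : ℕ) (i : Fin 2)
    (g : Fin n → A i) :
    ∃ B : Matrix (Fin n) (Fin n) ℂ, ∀ j k,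
      φi i (star (g j) * g k) = ∑ r, (starRingEnd ℂ) (B r j) * B r k := by
  obtain ⟨B, hB⟩ : ∃ B : Matrix (Fin n) (Fin n) ℂ,
      (Matrix.of fun j k => φi i (star (g j) * g k)) = B.conjTranspose * B := by
    open scoped MatrixOrder in
    obtain ⟨B, hB⟩ := CStarAlgebra.nonneg_iff_eq_star_mul_self.mp
      (gram_psd (φi := φi) hφi_pos n i g).nonneg
    exact ⟨B, hB⟩
  refine ⟨B, fun j k => ?_⟩
  have := congrFun (congrFun hB j) k
  rw [Matrix.of_apply] at this
  rw [this, Matrix.mul_apply]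
  refine Finset.sum_congr rfl fun r _ => ?_
  rw [Matrix.conjTranspose_apply, RCLike.star_def]

theorem gf_sum_nonneg (hφi_pos : ∀ i (a : A i), 0 ≤ φi i (star a * a)) :
    ∀ N n : ℕ, ∀ f : Fin n → ℂ, ∀ l : Fin n → List (Sig A),
    (∀ j, (l j).length ≤ N) →
    0 ≤ ∑ j, ∑ k, (starRingEnd ℂ) (f j) * f k * Gf A φi (l j) (l k) := by
  intro N
  induction N with
  | zero =>
    intro n f l hl
    have hle : ∀ j, l j = [] := fun j => List.length_eq_zero_iff.mp (Nat.le_zero.mp (hl j))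
    have heq : ∑ j, ∑ k, (starRingEnd ℂ) (f j) * f k * Gf A φi (l j) (l k)
        = (starRingEnd ℂ) (∑ j, f j) * (∑ k, f k) := by
      simp only [hle, Gf_nil_nil, mul_one, map_sum]
      rw [Finset.sum_mul_sum]
    rw [heq, starRingEnd_apply]
    exact star_mul_self_nonneg _
  | succ N ihN =>
    intro n f l hl
    classical
    set fE : Fin n → ℂ := fun j => if l j = [] then f j else 0 with hfE
    set fI : Fin 2 → Fin n → ℂ := fun i j => if headIdx (l j) = some i then f j else 0 with hfI
    have hdec : ∀ j k, (starRingEnd ℂ) (f j) * f k * Gf A φi (l j) (l k)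
        = (starRingEnd ℂ) (fE j) * fE k
          + ∑ i : Fin 2, (starRingEnd ℂ) (fI i j) * fI i k
              * φi i (star (headA i (l j)) * headA i (l k))
              * Gf A φi (l j).tail (l k).tail := by
      intro j k
      rcases hj : l j with _ | ⟨p, w⟩ <;> rcases hk : l k with _ | ⟨q, v⟩
      · simp [hfE, hfI, headIdx, hj, hk]
      · simp [hfE, hfI, headIdx, hj, hk]
      · simp [hfE, hfI, headIdx, hj, hk]
      · obtain ⟨ip, ap⟩ := p
        obtain ⟨iq, aq⟩ := q
        rw [← hj, ← hk]
        by_cases hip : ip = iq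
        · subst hip
          have he1 : fE j = 0 := by simp [hfE, hj]
          have he2 : fE k = 0 := by simp [hfE, hk]
          have hi1 : fI ip j = f j := by simp [hfI, headIdx, hj]
          have hi2 : fI ip k = f k := by simp [hfI, headIdx, hk]
          have hh1 : headA ip (l j) = ap := by simp [headA, hj]
          have hh2 : headA ip (l k) = aq := by simp [headA, hk]
          have hg : Gf A φi (l j) (l k) = φi ip (star ap * aq) * Gf A φi w v := by
            rw [hj, hk, Gf_cons_cons]
            congr 1
            rw [pairV, dif_pos rfl]
            rfl
          have ht1 : (l j).tail = w := by rw [hj]; rfl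
          have ht2 : (l k).tail = v := by rw [hk]; rfl
          rw [Finset.sum_eq_single ip ?side1 ?side2]
          · simp only [he1, he2, hi1, hi2, hh1, hh2, hg, ht1, ht2]
            ring
          case side1 =>
            intro b _ hb
            have hz : fI b j = 0 := by
              simp only [hfI, headIdx, hj]
              exact if_neg (by simpa using fun hh => hb hh.symm)
            rw [hz]
            simp
          case side2 => intro h; exact absurd (Finset.mem_univ ip) h
        · have hz : ∀ i : Fin 2, (starRingEnd ℂ) (fI i j) * fI i k
              * φi i (star (headA i (l j)) * headA i (l k))
              * Gf A φi (l j).tail (l k).tail = 0 := by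
            intro i
            by_cases hi : ip = i
            · subst hi
              have hk0 : fI ip k = 0 := by
                simp only [hfI, headIdx, hk]
                exact if_neg (by simpa using fun hh => hip hh.symm)
              rw [hk0]
              ring
            · have hj0 : fI i j = 0 := by
                simp only [hfI, headIdx, hj]
                exact if_neg (by simpa using fun hh => hi hh)
              rw [hj0]
              simp
          have hzz : (∑ i : Fin 2, (starRingEnd ℂ) (fI i j) * fI i k
              * φi i (star (headA i (l j)) * headA i (l k))
              * Gf A φi (l j).tail (l k).tail) = 0 := Finset.sum_eq_zero fun i _ => hz i
          rw [hzz]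
          have he1 : fE j = 0 := by simp [hfE, hj]
          have hg : Gf A φi (l j) (l k) = 0 := by
            rw [hj, hk, Gf_cons_cons, pairV, dif_neg hip, zero_mul]
          rw [hg, he1]
          simp
    have hsplit : ∑ j, ∑ k, (starRingEnd ℂ) (f j) * f k * Gf A φi (l j) (l k)
        = ((starRingEnd ℂ) (∑ j, fE j) * (∑ k, fE k))
          + ∑ i : Fin 2, ∑ j, ∑ k, (starRingEnd ℂ) (fI i j) * fI i k
              * φi i (star (headA i (l j)) * headA i (l k))
              * Gf A φi (l j).tail (l k).tail := by
      simp only [hdec]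
      rw [Finset.sum_congr rfl fun j _ => Finset.sum_add_distrib]
      rw [Finset.sum_add_distrib]
      congr 1
      · rw [map_sum, Finset.sum_mul_sum]
      · rw [Finset.sum_congr rfl fun j _ => Finset.sum_comm]
        rw [Finset.sum_comm]
    rw [hsplit]
    have h1 : 0 ≤ (starRingEnd ℂ) (∑ j, fE j) * (∑ k, fE k) := by
      rw [starRingEnd_apply]
      exact star_mul_self_nonneg _
    refine add_nonneg h1 (Finset.sum_nonneg fun i _ => ?_)
    obtain ⟨B, hB⟩ := gram_entry (φi := φi) hφi_pos n i (fun j => headA i (l j))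
    have step1 : ∀ j k, (starRingEnd ℂ) (fI i j) * fI i k
          * φi i (star (headA i (l j)) * headA i (l k))
          * Gf A φi (l j).tail (l k).tail
        = ∑ r, (starRingEnd ℂ) (B r j * fI i j) * (B r k * fI i k)
            * Gf A φi (l j).tail (l k).tail := by
      intro j k
      rw [hB j k, Finset.mul_sum, Finset.sum_mul]
      refine Finset.sum_congr rfl fun r _ => ?_
      simp only [map_mul]
      ring
    have hrw : ∑ j, ∑ k, (starRingEnd ℂ) (fI i j) * fI i k
          * φi i (star (headA i (l j)) * headA i (l k))
          * Gf A φi (l j).tail (l k).tail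
        = ∑ r, ∑ j, ∑ k, (starRingEnd ℂ) (B r j * fI i j) * (B r k * fI i k)
            * Gf A φi (l j).tail (l k).tail := by
      calc ∑ j, ∑ k, (starRingEnd ℂ) (fI i j) * fI i k
          * φi i (star (headA i (l j)) * headA i (l k))
          * Gf A φi (l j).tail (l k).tail
          = ∑ j, ∑ k, ∑ r, (starRingEnd ℂ) (B r j * fI i j) * (B r k * fI i k)
            * Gf A φi (l j).tail (l k).tail :=
        Finset.sum_congr rfl fun j _ => Finset.sum_congr rfl fun k _ => step1 j k
        _ = ∑ j, ∑ r, ∑ k, (starRingEnd ℂ) (B r j * fI i j) * (B r k * fI i k)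
            * Gf A φi (l j).tail (l k).tail :=
        Finset.sum_congr rfl fun j _ => Finset.sum_comm
        _ = ∑ r, ∑ j, ∑ k, (starRingEnd ℂ) (B r j * fI i j) * (B r k * fI i k)
            * Gf A φi (l j).tail (l k).tail := Finset.sum_comm
    rw [hrw]
    refine Finset.sum_nonneg fun r _ => ?_
    exact ihN n (fun j => B r j * fI i j) (fun j => (l j).tail)
      (fun j => by show (l j).tail.length ≤ N; have h1 := hl j; have h2 := List.length_tail (l := l j); omega)

end psd

end FreeProdPos

/-- Positivity of the free product functional (Nica–Speicher, Theorem 6.13):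
if `φ₁, φ₂` are positive linear functionals on unital complex `*`-algebras,
then the free product functional — the functional on the unital algebra free
product that restricts to the `φᵢ` and vanishes on alternating products of
centered elements — is positive. -/
theorem free_product_functional_positive
    (A : Fin 2 → Type*) [∀ i, Ring (A i)] [∀ i, Algebra ℂ (A i)]
    [∀ i, StarRing (A i)] [∀ i, StarModule ℂ (A i)]
    (φi : ∀ i, A i →ₗ[ℂ] ℂ)
    (hφi_pos : ∀ i (a : A i), 0 ≤ φi i (star a * a))
    (hφi_one : ∀ i, φi i 1 = 1)
    -- the star operation on the free product, induced by the stars of the factors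
    (S : FreeProduct ℂ A →ₛₗ[starRingEnd ℂ] FreeProduct ℂ A)
    (hSmul : ∀ x y : FreeProduct ℂ A, S (x * y) = S y * S x)
    (hSι : ∀ (i : Fin 2) (a : A i),
      S (FreeProduct.ι ℂ A i a) = FreeProduct.ι ℂ A i (star a))
    -- the free product functional
    (φ : FreeProduct ℂ A →ₗ[ℂ] ℂ)
    (hφ_one : φ 1 = 1)
    (hφ_restrict : ∀ (i : Fin 2) (a : A i), φ (FreeProduct.ι ℂ A i a) = φi i a)
    (hφ_vanish : ∀ (n : ℕ) (idx : Fin n → Fin 2)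
      (_halt : ∀ (k : Fin n) (h : (k : ℕ) + 1 < n), idx k ≠ idx ⟨(k : ℕ) + 1, h⟩)
      (a : ∀ k, A (idx k)), 0 < n → (∀ k, φi (idx k) (a k) = 0) →
      φ ((List.ofFn fun k => FreeProduct.ι ℂ A (idx k) (a k)).prod) = 0) :
    ∀ x : FreeProduct ℂ A, 0 ≤ φ (S x * x) := by
  intro x
  classical
  obtain ⟨n, c, g, hg⟩ :=
    Submodule.mem_span_set'.mp (FreeProdPos.mem_span_spanset (φi := φi) hφi_one x)
  choose L hLa hLc hLv using fun j => (g j).2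
  have hx' : x = ∑ j, c j • FreeProdPos.val (L j) := by
    rw [← hg]
    exact (Finset.sum_congr rfl fun j _ => by rw [hLv j]).symm
  have key : φ (S x * x)
      = ∑ j, ∑ k, (starRingEnd ℂ) (c j) * c k * FreeProdPos.Gf A φi (L j) (L k) := by
    rw [hx', map_sum]
    have hterm : ∀ j, S (c j • FreeProdPos.val (L j))
        = (starRingEnd ℂ) (c j) • S (FreeProdPos.val (L j)) := fun j => S.map_smulₛₗ _ _
    rw [Finset.sum_congr rfl fun j _ => hterm j, Finset.sum_mul_sum, map_sum]
    refine Finset.sum_congr rfl fun j _ => ?_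
    rw [map_sum]
    refine Finset.sum_congr rfl fun k _ => ?_
    rw [smul_mul_smul_comm, map_smul, smul_eq_mul,
      FreeProdPos.pairing (φi := φi) S hSmul hSι φ hφ_one hφ_vanish hφi_pos hφi_one
        (L j) (hLa j) (hLc j) (L k) (hLa k) (hLc k)]
  rw [key]
  exact FreeProdPos.gf_sum_nonneg (φi := φi) hφi_pos (Finset.univ.sup fun j => (L j).length)
    n c L (fun j => Finset.le_sup (f := fun j => (L j).length) (Finset.mem_univ j))
end

section
/- Main theorem: if for each i ∈ I the functional τᵢ is reflection positive with respect to (𝒜ᵢ, 𝒜ᵢ⁺, 𝒜ᵢ⁻, θᵢ), then the bi-free product functional τ on the bi-free product (𝒜, 𝒜⁺, 𝒜⁻, θ) = ∗_{i∈I}(𝒜ᵢ, 𝒜ᵢ⁺, 𝒜ᵢ⁻, θᵢ, τᵢ) is reflection positive: τ(θ(a)a) ≥ 0 for all a ∈ 𝒜⁺. -/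
open scoped ComplexOrder

private lemma aux_posSemidef {T : Type*} [Fintype T] [DecidableEq T] (A : Matrix T T ℂ)
    (h : ∀ d : T → ℂ, 0 ≤ dotProduct (star d) (A.mulVec d)) : A.PosSemidef := by
  refine Matrix.posSemidef_iff_dotProduct_mulVec.mpr ⟨?_, h⟩
  rw [Matrix.isHermitian_iff_isSymmetric, LinearMap.isSymmetric_iff_inner_map_self_real]
  intro v
  set d : T → ℂ := WithLp.equiv 2 (T → ℂ) v with hd
  set z : ℂ := dotProduct (star d) (A.mulVec d) with hz
  have hreal : star z = z := by
    have h0 := h d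
    rw [← hz] at h0
    rw [Complex.nonneg_iff] at h0
    apply Complex.ext <;> simp [← h0.2]
  have key : (inner ℂ (Matrix.toEuclideanLin A v) v : ℂ) = star z := by
    rw [EuclideanSpace.inner_eq_star_dotProduct]
    rw [Matrix.dotProduct_star, dotProduct_comm]; rfl
  rw [key, starRingEnd_apply, star_star, hreal]

private lemma schur_sum_nonneg {T : Type*} [Fintype T] [DecidableEq T] :
    ∀ (n : ℕ) (M : Fin n → T → T → ℂ),
    (∀ k (d : T → ℂ), 0 ≤ ∑ l, ∑ m, (starRingEnd ℂ) (d l) * d m * M k l m) →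
    ∀ c : T → ℂ, 0 ≤ ∑ l, ∑ m, (starRingEnd ℂ) (c l) * c m * ∏ k, M k l m := by
  intro n
  induction n with
  | zero =>
    intro M _ c
    have h1 : ∑ l, ∑ m, (starRingEnd ℂ) (c l) * c m * ∏ k : Fin 0, M k l m
        = (∑ l, (starRingEnd ℂ) (c l)) * ∑ m, c m := by
      rw [Finset.sum_mul_sum]
      exact Finset.sum_congr rfl fun l _ => Finset.sum_congr rfl fun m _ => by simp
    rw [h1, ← map_sum, starRingEnd_apply]
    exact star_mul_self_nonneg _
  | succ n ih =>
    intro M hM c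
    set A : Matrix T T ℂ := Matrix.of (M 0) with hA
    have hApsd : A.PosSemidef := by
      apply aux_posSemidef
      intro d
      have h0 := hM 0 d
      have : dotProduct (star d) (A.mulVec d)
          = ∑ l, ∑ m, (starRingEnd ℂ) (d l) * d m * M 0 l m := by
        simp only [dotProduct, Matrix.mulVec, Pi.star_apply, Finset.mul_sum]
        refine Finset.sum_congr rfl fun l _ => Finset.sum_congr rfl fun m _ => ?_
        simp only [hA, Matrix.of_apply, starRingEnd_apply]
        ring
      rw [this]; exact h0
    obtain ⟨mm, v, hv⟩ := Matrix.posSemidef_iff_eq_sum_vecMulVec.mp hApsd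
    set B : Fin mm → T → ℂ := fun r => star (v r) with hBdef
    have hM0 : ∀ l m, M 0 l m = ∑ r, (starRingEnd ℂ) (B r l) * B r m := by
      intro l m
      rw [show M 0 l m = A l m from rfl, hv, Matrix.sum_apply]
      refine Finset.sum_congr rfl fun r _ => ?_
      simp [B, Matrix.vecMulVec_apply]
    have expand : ∀ l m, (starRingEnd ℂ) (c l) * c m * ∏ k : Fin (n+1), M k l m
        = ∑ r, (starRingEnd ℂ) (c l * B r l) * (c m * B r m) * ∏ k : Fin n, M k.succ l m := by
      intro l m
      rw [Fin.prod_univ_succ, hM0, Finset.sum_mul, Finset.mul_sum]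
      refine Finset.sum_congr rfl fun r _ => ?_
      simp only [map_mul]
      ring
    calc (0:ℂ) ≤ ∑ r, ∑ l, ∑ m, (starRingEnd ℂ) (c l * B r l)
          * (c m * B r m) * ∏ k : Fin n, M k.succ l m :=
          Finset.sum_nonneg fun r _ =>
            ih (fun k => M k.succ) (fun k d => hM k.succ d) (fun l => c l * B r l)
      _ = ∑ l, ∑ m, (starRingEnd ℂ) (c l) * c m * ∏ k : Fin (n+1), M k l m := by
          rw [Finset.sum_comm]
          refine Finset.sum_congr rfl fun l _ => ?_
          rw [Finset.sum_comm]
          exact Finset.sum_congr rfl fun m _ => (expand l m).symm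

private lemma sigma_snd_eq {I : Type*} {n₁ n₂ : ℕ} {i₁ : Fin n₁ → I} {i₂ : Fin n₂ → I}
    (h : (⟨n₁, i₁⟩ : Σ n, Fin n → I) = ⟨n₂, i₂⟩) (e : n₁ = n₂) :
    ∀ k, i₁ (Fin.cast e.symm k) = i₂ k := by
  cases h; intro k; rfl

private lemma sigma_eq_of {I : Type*} {n₁ n₂ : ℕ} {i₁ : Fin n₁ → I} {i₂ : Fin n₂ → I}
    (e : n₁ = n₂) (h : ∀ k, i₁ (Fin.cast e.symm k) = i₂ k) :
    (⟨n₁, i₁⟩ : Σ n, Fin n → I) = ⟨n₂, i₂⟩ := by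
  subst e
  exact congrArg _ (funext fun k => h k)

private lemma ofFn_cast' {α : Type*} {n m : ℕ} (h : n = m) (f : Fin n → α) :
    List.ofFn f = List.ofFn (fun k : Fin m => f (Fin.cast h.symm k)) := by
  subst h; rfl

/-- Main theorem: if each `τᵢ` is reflection positive with respect to
`(𝒜ᵢ, 𝒜ᵢ⁺, 𝒜ᵢ⁻, θᵢ)`, then the bi-free product functional `τ` — characterized
by the moment formula
`τ(θ(aₘ)⋯θ(a₁)·bₙ⋯b₁) = δ_{mn} ∏ₖ δ_{i(k)j(k)} τ(θ(aₖ)bₖ)` on alternating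
centered words — is reflection positive: `τ(θ(a)a) ≥ 0` for all `a ∈ 𝒜⁺`,
where `𝒜⁺` is the linear span of the alternating centered words. -/
theorem bifree_product_reflection_positive
    {I : Type*} [DecidableEq I] {𝒜 : Type*} [Ring 𝒜] [Algebra ℂ 𝒜]
    (Ap : I → Type*) [∀ i, Ring (Ap i)] [∀ i, Algebra ℂ (Ap i)]
    (ιp : ∀ i, Ap i →ₐ[ℂ] 𝒜)
    (θ : 𝒜 →ₛₗ[starRingEnd ℂ] 𝒜)
    (hθmul : ∀ x y : 𝒜, θ (x * y) = θ x * θ y)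
    (hθθ : ∀ x : 𝒜, θ (θ x) = x)
    (τ : 𝒜 →ₗ[ℂ] ℂ)
    -- the defining moment formula for the bi-free product state
    (hmoment : ∀ (m n : ℕ) (j : Fin m → I) (i : Fin n → I)
      (a : ∀ k, Ap (j k)) (b : ∀ k, Ap (i k)),
      (∀ (k : Fin m) (h : (k : ℕ) + 1 < m), j k ≠ j ⟨(k : ℕ) + 1, h⟩) →
      (∀ (k : Fin n) (h : (k : ℕ) + 1 < n), i k ≠ i ⟨(k : ℕ) + 1, h⟩) →
      (∀ k, τ (ιp (j k) (a k)) = 0) → (∀ k, τ (ιp (i k) (b k)) = 0) →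
      τ ((List.ofFn fun k => θ (ιp (j k) (a k))).reverse.prod *
          (List.ofFn fun k => ιp (i k) (b k)).reverse.prod)
        = if h : m = n then
            ∏ k : Fin n,
              (if j (Fin.cast h.symm k) = i k then
                τ (θ (ιp (j (Fin.cast h.symm k)) (a (Fin.cast h.symm k))) *
                    ιp (i k) (b k))
              else 0)
          else 0)
    -- reflection positivity of each `τᵢ` (as seen inside `𝒜`)
    (hRP : ∀ (i : I) (x : Ap i), 0 ≤ τ (θ (ιp i x) * ιp i x)) :
    ∀ a ∈ Submodule.span ℂ
        {x : 𝒜 | ∃ (n : ℕ) (i : Fin n → I) (b : ∀ k, Ap (i k)),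
          (∀ (k : Fin n) (h : (k : ℕ) + 1 < n), i k ≠ i ⟨(k : ℕ) + 1, h⟩) ∧
          (∀ k, τ (ιp (i k) (b k)) = 0) ∧
          x = (List.ofFn fun k => ιp (i k) (b k)).reverse.prod},
      0 ≤ τ (θ a * a) := by
  classical
  -- basic facts about θ
  have hθ1 : θ 1 = 1 := by
    have h := hθmul (θ 1) 1
    rw [mul_one, hθθ, one_mul] at h
    exact h.symm
  have θlist : ∀ L : List 𝒜, θ L.prod = (L.map θ).prod := by
    intro L
    induction L with
    | nil => simpa using hθ1
    | cons x L ihL => simp [hθmul, ihL]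
  have θword : ∀ {nl : ℕ} (f : Fin nl → 𝒜),
      θ ((List.ofFn f).reverse.prod) = (List.ofFn fun k => θ (f k)).reverse.prod := by
    intro nl f
    rw [θlist, List.map_reverse, List.map_ofFn]
    rfl
  have ιcast : ∀ {j j' : I} (e : j = j') (x : Ap j),
      ιp j' (cast (congrArg Ap e) x) = ιp j x := by
    intro j j' e x; subst e; rfl
  -- expansion of τ on products of linear combinations
  have expand_τ : ∀ (N : ℕ) (d e : Fin N → ℂ) (u v : Fin N → 𝒜),
      τ (θ (∑ l, d l • u l) * (∑ m, e m • v m))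
        = ∑ l, ∑ m, (starRingEnd ℂ) (d l) * e m * τ (θ (u l) * v m) := by
    intro N d e u v
    simp only [map_sum, map_smulₛₗ, Finset.sum_mul_sum, smul_mul_smul_comm, map_smul,
      smul_eq_mul, RingHom.id_apply]
  -- decompose a as a linear combination of words
  intro a ha
  rw [Submodule.mem_span_set'] at ha
  obtain ⟨N, c, g, rfl⟩ := ha
  choose n i b halt hcent hw using fun l => (g l).2
  obtain ⟨W, hWdef⟩ : ∃ W : Fin N → 𝒜,
      ∀ l, W l = (List.ofFn fun k => ιp (i l k) (b l k)).reverse.prod :=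
    ⟨_, fun l => rfl⟩
  have hw' : ∀ l, ((g l : 𝒜)) = W l := fun l => (hw l).trans (hWdef l).symm
  simp only [hw']
  rw [expand_τ N c c W W]
  -- the pattern of each word
  set P : Fin N → Σ nn : ℕ, Fin nn → I := fun l => ⟨n l, i l⟩ with hP
  have Ezero : ∀ l m, P l ≠ P m → τ (θ (W l) * W m) = 0 := by
    intro l m hne
    rw [hWdef l, hWdef m, θword]
    rw [hmoment (n l) (n m) (i l) (i m) (b l) (b m) (halt l) (halt m) (hcent l) (hcent m)]
    by_cases h : n l = n m
    · rw [dif_pos h]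
      have hnall : ¬ ∀ k, i l (Fin.cast h.symm k) = i m k := fun hk => hne (sigma_eq_of h hk)
      push_neg at hnall
      obtain ⟨k, hk⟩ := hnall
      exact Finset.prod_eq_zero (Finset.mem_univ k) (if_neg hk)
    · rw [dif_neg h]
  obtain ⟨F, hF⟩ : ∃ F : Fin N → Fin N → (Σ nn : ℕ, Fin nn → I) → ℂ,
      ∀ l m p, F l m p
        = if P l = p ∧ P m = p then (starRingEnd ℂ) (c l) * c m * τ (θ (W l) * W m) else 0 :=
    ⟨_, fun _ _ _ => rfl⟩
  -- group the double sum according to the pattern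
  have key : ∀ l m, (starRingEnd ℂ) (c l) * c m * τ (θ (W l) * W m)
      = ∑ p ∈ Finset.image P Finset.univ, F l m p := by
    intro l m
    simp only [hF]
    by_cases h : P l = P m
    · rw [Finset.sum_eq_single_of_mem (P l) (Finset.mem_image_of_mem P (Finset.mem_univ l))
        (fun p _ hp => if_neg (fun hc => hp hc.1.symm))]
      rw [if_pos ⟨rfl, h.symm⟩]
    · rw [Ezero l m h, mul_zero]
      symm
      exact Finset.sum_eq_zero fun p _ => by simp [Ezero l m h]
  calc (0:ℂ) ≤ ∑ p ∈ Finset.image P Finset.univ, ∑ l : Fin N, ∑ m : Fin N, F l m p := ?_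
    _ = ∑ l : Fin N, ∑ p ∈ Finset.image P Finset.univ, ∑ m : Fin N, F l m p :=
        Finset.sum_comm
    _ = ∑ l : Fin N, ∑ m : Fin N, ∑ p ∈ Finset.image P Finset.univ, F l m p :=
        Finset.sum_congr rfl fun l _ => Finset.sum_comm
    _ = ∑ l : Fin N, ∑ m : Fin N, (starRingEnd ℂ) (c l) * c m * τ (θ (W l) * W m) :=
        Finset.sum_congr rfl fun l _ => Finset.sum_congr rfl fun m _ => (key l m).symm
  refine Finset.sum_nonneg fun p hp => ?_
  obtain ⟨l₀, -, hl₀⟩ := Finset.mem_image.mp hp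
  obtain ⟨nn, ii⟩ := p
  have e : ∀ l, P l = ⟨nn, ii⟩ → n l = nn := fun l hl => congrArg Sigma.fst hl
  obtain ⟨β, hβ⟩ : ∃ β : Fin N → ∀ k : Fin nn, Ap (ii k),
      ∀ l, β l = if hl : P l = ⟨nn, ii⟩ then
          (fun k => cast (congrArg Ap (sigma_snd_eq hl (e l hl) k))
            (b l (Fin.cast (e l hl).symm k)))
        else fun _ => 0 := ⟨_, fun _ => rfl⟩
  have F1 : ∀ l (hl : P l = ⟨nn, ii⟩) (k : Fin nn),
      ιp (ii k) (β l k)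
        = ιp (i l (Fin.cast (e l hl).symm k)) (b l (Fin.cast (e l hl).symm k)) := by
    intro l hl k
    rw [hβ l, dif_pos hl]
    exact ιcast (sigma_snd_eq hl (e l hl) k) _
  have F2 : ∀ l k, τ (ιp (ii k) (β l k)) = 0 := by
    intro l k
    by_cases hl : P l = ⟨nn, ii⟩
    · rw [F1 l hl k]; exact hcent l _
    · rw [hβ l, dif_neg hl]; simp
  have e₀ : n l₀ = nn := e l₀ hl₀
  have hs₀ : ∀ k, i l₀ (Fin.cast e₀.symm k) = ii k := sigma_snd_eq hl₀ e₀
  have F3 : ∀ (k : Fin nn) (h : (k : ℕ) + 1 < nn), ii k ≠ ii ⟨(k : ℕ) + 1, h⟩ := by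
    intro k h hEq
    have h' : ((Fin.cast e₀.symm k : Fin (n l₀)) : ℕ) + 1 < n l₀ := by
      simp only [Fin.coe_cast, e₀]; exact h
    refine halt l₀ (Fin.cast e₀.symm k) h' ?_
    calc i l₀ (Fin.cast e₀.symm k) = ii k := hs₀ k
      _ = ii ⟨(k : ℕ) + 1, h⟩ := hEq
      _ = i l₀ (Fin.cast e₀.symm ⟨(k : ℕ) + 1, h⟩) := (hs₀ _).symm
      _ = i l₀ ⟨((Fin.cast e₀.symm k : Fin (n l₀)) : ℕ) + 1, h'⟩ := rfl
  have F4 : ∀ l (hl : P l = ⟨nn, ii⟩),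
      W l = (List.ofFn fun k => ιp (ii k) (β l k)).reverse.prod := by
    intro l hl
    rw [hWdef l, ofFn_cast' (e l hl)]
    have harg : (fun k : Fin nn =>
          ιp (i l (Fin.cast (e l hl).symm k)) (b l (Fin.cast (e l hl).symm k)))
        = fun k => ιp (ii k) (β l k) := funext fun k => (F1 l hl k).symm
    rw [harg]
  obtain ⟨M, hM⟩ : ∃ M : Fin nn → Fin N → Fin N → ℂ,
      ∀ k l m, M k l m = τ (θ (ιp (ii k) (β l k)) * ιp (ii k) (β m k)) :=
    ⟨_, fun _ _ _ => rfl⟩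
  have F5 : ∀ l m, P l = ⟨nn, ii⟩ → P m = ⟨nn, ii⟩ →
      τ (θ (W l) * W m) = ∏ k, M k l m := by
    intro l m hl hm'
    rw [F4 l hl, F4 m hm', θword]
    rw [hmoment nn nn ii ii (β l) (β m) F3 F3 (F2 l) (F2 m)]
    rw [dif_pos rfl]
    refine Finset.prod_congr rfl fun k _ => ?_
    rw [if_pos (show ii (Fin.cast (Eq.refl nn).symm k) = ii k from rfl)]
    exact (hM k l m).symm
  obtain ⟨c', hc'⟩ : ∃ c' : Fin N → ℂ, ∀ l, c' l = if P l = ⟨nn, ii⟩ then c l else 0 :=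
    ⟨_, fun _ => rfl⟩
  have F6 : ∀ l m, F l m ⟨nn, ii⟩ = (starRingEnd ℂ) (c' l) * c' m * ∏ k, M k l m := by
    intro l m
    rw [hF, hc', hc']
    by_cases hl : P l = ⟨nn, ii⟩ <;> by_cases hm' : P m = ⟨nn, ii⟩
    · rw [if_pos ⟨hl, hm'⟩, if_pos hl, if_pos hm', F5 l m hl hm']
    · rw [if_neg (fun hc => hm' hc.2), if_neg hm', mul_zero, zero_mul]
    · rw [if_neg (fun hc => hl hc.1), if_pos hm', if_neg hl, map_zero, zero_mul, zero_mul]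
    · rw [if_neg (fun hc => hl hc.1), if_neg hm', mul_zero, zero_mul]
  rw [show (∑ l : Fin N, ∑ m : Fin N, F l m ⟨nn, ii⟩)
      = ∑ l, ∑ m, (starRingEnd ℂ) (c' l) * c' m * ∏ k, M k l m from
    Finset.sum_congr rfl fun l _ => Finset.sum_congr rfl fun m _ => F6 l m]
  refine schur_sum_nonneg nn M (fun k d => ?_) c'
  have hpos := hRP (ii k) (∑ l, d l • β l k)
  have hsum : ιp (ii k) (∑ l, d l • β l k) = ∑ l, d l • ιp (ii k) (β l k) := by
    rw [map_sum]
    exact Finset.sum_congr rfl fun l _ => by rw [map_smul]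
  rw [hsum, expand_τ N d d _ _] at hpos
  simpa only [hM] using hpos
end
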